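/- Let X be a random variable with values in a finite set of codewords, and for each multi-index i = (i_0,…,i_{N−1}) with ∑ i_j = j define the multinomial coefficient b_i = j!/(i_0!⋯i_{N−1}!). For a code C of size M with codewords in {−1,1}^N, ∑_{i ∈ I_j} b_i · (∑_{c∈C} ∏_{k} c_k^{i_k})² = M · ∑_{k=0}^{N} (N−2k)^j · W_k°, where W_k° is the distance distribution W_k° = |{(c',c'') ∈ C×C : d(c',c'') = k}|/M and d is Hamming distance. -/

import Mathlib

theorem stmt_11 (N j M : ℕ) (C : Finset (Fin N → ℝ)) (hM : C.card = M) (hMpos : 0 < M)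
    (hval : ∀ c ∈ C, ∀ k, c k = 1 ∨ c k = -1) :
    ∑ i ∈ Finset.Nat.antidiagonalTuple N j,
        (Nat.multinomial Finset.univ i : ℝ) * (∑ c ∈ C, ∏ k, (c k) ^ (i k)) ^ 2
      = (M : ℝ) * ∑ k ∈ Finset.range (N + 1),
          ((N : ℝ) - 2 * k) ^ j *
            (((C ×ˢ C).filter fun p =>
                (Finset.univ.filter fun i => p.1 i ≠ p.2 i).card = k).card / (M : ℝ)) := by
  classical
  have hM0 : (M : ℝ) ≠ 0 := Nat.cast_ne_zero.mpr hMpos.ne'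
  -- define distance function
  set d : (Fin N → ℝ) × (Fin N → ℝ) → ℕ :=
    fun p => (Finset.univ.filter fun i => p.1 i ≠ p.2 i).card with hd
  -- LHS rewrite
  have lhs_eq : ∑ i ∈ Finset.Nat.antidiagonalTuple N j,
      (Nat.multinomial Finset.univ i : ℝ) * (∑ c ∈ C, ∏ k, (c k) ^ (i k)) ^ 2
      = ∑ p ∈ C ×ˢ C, (∑ k, p.1 k * p.2 k) ^ j := by
    have key : ∀ p ∈ C ×ˢ C, (∑ k, p.1 k * p.2 k) ^ j
        = ∑ i ∈ Finset.Nat.antidiagonalTuple N j,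
          (Nat.multinomial Finset.univ i : ℝ) * ∏ k, (p.1 k * p.2 k) ^ (i k) := by
      intro p _
      rw [← Finset.piAntidiag_univ_fin_eq_antidiagonalTuple,
        Finset.sum_pow_eq_sum_piAntidiag]
    rw [Finset.sum_congr rfl key, Finset.sum_comm]
    refine Finset.sum_congr rfl fun i _ => ?_
    rw [← Finset.mul_sum]
    congr 1
    rw [sq, Finset.sum_mul_sum, ← Finset.sum_product']
    refine Finset.sum_congr rfl fun p _ => ?_
    rw [← Finset.prod_mul_distrib]
    simp [mul_pow]
  rw [lhs_eq]
  -- inner product equals N - 2 d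
  have inner_eq : ∀ p ∈ C ×ˢ C, (∑ k, p.1 k * p.2 k) = (N : ℝ) - 2 * d p := by
    intro p hp
    rw [Finset.mem_product] at hp
    have h1 : ∀ k, p.1 k * p.2 k = if p.1 k ≠ p.2 k then (-1 : ℝ) else 1 := by
      intro k
      rcases hval p.1 hp.1 k with h | h <;> rcases hval p.2 hp.2 k with h' | h' <;>
        norm_num [h, h']
    rw [Finset.sum_congr rfl fun k _ => h1 k, Finset.sum_ite,
      Finset.sum_const, Finset.sum_const]
    have hcard : (Finset.univ.filter fun k => ¬ p.1 k ≠ p.2 k).card = N - d p := by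
      rw [Finset.filter_not, Finset.card_sdiff_of_subset (Finset.filter_subset _ _)]
      simp [hd]
    have hdN : d p ≤ N := by
      simpa using Finset.card_filter_le Finset.univ fun i => p.1 i ≠ p.2 i
    rw [hcard]
    simp only [nsmul_eq_mul, mul_one, mul_neg_one, Nat.cast_sub hdN, hd]
    rw [Nat.cast_sub (by simpa [hd] using hdN)]
    ring
  rw [Finset.sum_congr rfl fun p hp => by rw [inner_eq p hp]]
  -- group by distance
  have fib : ∑ p ∈ C ×ˢ C, ((N : ℝ) - 2 * d p) ^ j
      = ∑ k ∈ Finset.range (N + 1), ∑ p ∈ (C ×ˢ C).filter fun p => d p = k,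
          ((N : ℝ) - 2 * d p) ^ j := by
    rw [Finset.sum_fiberwise_of_maps_to]
    intro p _
    rw [Finset.mem_range, Nat.lt_succ_iff]
    simpa using Finset.card_filter_le Finset.univ fun i => p.1 i ≠ p.2 i
  rw [fib, Finset.mul_sum]
  refine Finset.sum_congr rfl fun k _ => ?_
  rw [Finset.sum_congr rfl (fun p hp => by
    rw [(Finset.mem_filter.mp hp).2]), Finset.sum_const, nsmul_eq_mul]
  field_simp
  ring
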